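/- Let A_* be a filtered ring, M_* a filtered right A_*-module and N_* a filtered left A_*-module (filtrations indexed by Z, with the balanced product M_* ⊗_{A_*} N_* defined as the coequalizer of the two maps M_* ⊗ A_* ⊗ N_* ⇉ M_* ⊗ N_* in filtered objects, using Day convolution). Then there is a canonical natural isomorphism Gr(M_* ⊗_{A_*} N_*) ≅ Gr(M_*) ⊗_{Gr(A_*)} Gr(N_*). -/

import Mathlib

open TensorProduct DirectSum

noncomputable section
namespace Stmt11

variable (R : Type) [CommRing R]
variable (A M N : ℤ → Type)
variable [∀ i, AddCommGroup (A i)] [∀ i, Module R (A i)]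
variable [∀ i, AddCommGroup (M i)] [∀ i, Module R (M i)]
variable [∀ i, AddCommGroup (N i)] [∀ i, Module R (N i)]
variable (tA : ∀ i j : ℤ, i ≤ j → (A i →ₗ[R] A j))
variable (tM : ∀ i j : ℤ, i ≤ j → (M i →ₗ[R] M j))
variable (tN : ∀ i j : ℤ, i ≤ j → (N i →ₗ[R] N j))
variable (u : A 0)
variable (μ : ∀ i j : ℤ, A i →ₗ[R] A j →ₗ[R] A (i + j))
variable (ξ : ∀ i j : ℤ, M i →ₗ[R] A j →ₗ[R] M (i + j))
variable (ζ : ∀ i j : ℤ, A i →ₗ[R] N j →ₗ[R] N (i + j))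

/-- The index set for degree `n` of the Day convolution: pairs `(i,j)` with `i + j = n`. -/
abbrev CIdx (n : ℤ) : Type := {p : ℤ × ℤ // p.1 + p.2 = n}

/-- The direct sum `⊕_{i+j=n} Mᵢ ⊗ Nⱼ`. -/
abbrev MNSum (n : ℤ) : Type :=
  DirectSum (CIdx n) (fun p => M p.1.1 ⊗[R] N p.1.2)

/-- The canonical inclusion of the `(i,j)` summand. -/
abbrev mnLof (n : ℤ) (p : CIdx n) :
    (M p.1.1 ⊗[R] N p.1.2) →ₗ[R] MNSum R M N n :=
  DirectSum.lof R (CIdx n) (fun q => M q.1.1 ⊗[R] N q.1.2) p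

/-- The relations presenting `(M ⊛ N)ₙ = colim_{i+j≤n} Mᵢ ⊗ Nⱼ` as a quotient of
`⊕_{i+j=n} Mᵢ ⊗ Nⱼ`. -/
def MNConvRel (n : ℤ) : Submodule R (MNSum R M N n) :=
  Submodule.span R {z | ∃ (i j : ℤ) (hij : i + j + 1 = n) (x : M i) (y : N j),
    z = mnLof R M N n ⟨(i, j + 1), by omega⟩ (x ⊗ₜ[R] tN j (j + 1) (by omega) y)
      - mnLof R M N n ⟨(i + 1, j), by omega⟩ (tM i (i + 1) (by omega) x ⊗ₜ[R] y)}

/-- Degree `n` of the Day convolution `M ⊛ N`. -/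
abbrev MNConv (n : ℤ) : Type := MNSum R M N n ⧸ MNConvRel R M N tM tN n

/-- The relations defining the balanced smash product `M ⊛_A N` as the coequalizer of
`M ⊛ A ⊛ N ⇉ M ⊛ N`: for `i + j + k = n`, `(x·a) ⊗ y` and `x ⊗ (a·y)` are identified. -/
def BalRel (n : ℤ) : Submodule R (MNConv R M N tM tN n) :=
  Submodule.span R
    {w | ∃ (i j k : ℤ) (hijk : i + j + k = n) (x : M i) (a : A j) (y : N k),
      w = Submodule.Quotient.mk
            (mnLof R M N n ⟨(i + j, k), by omega⟩ (ξ i j x a ⊗ₜ[R] y))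
        - Submodule.Quotient.mk
            (mnLof R M N n ⟨(i, j + k), by omega⟩ (x ⊗ₜ[R] ζ j k a y))}

/-- Degree `n` of the balanced product `M ⊛_A N` (a filtered object). -/
abbrev Bal (n : ℤ) : Type := MNConv R M N tM tN n ⧸ BalRel R A M N tM tN ξ ζ n

/-- The image of the structure map `(M ⊛_A N)_{n-1} → (M ⊛_A N)ₙ`. -/
def BalIm (n : ℤ) : Submodule R (Bal R A M N tM tN ξ ζ n) :=
  Submodule.span R {w | ∃ (i j : ℤ) (hij : i + j + 1 = n) (x : M i) (y : N j),
    w = Submodule.Quotient.mk (Submodule.Quotient.mk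
          (mnLof R M N n ⟨(i, j + 1), by omega⟩ (x ⊗ₜ[R] tN j (j + 1) (by omega) y)))}

/-- The associated graded `Gr_n(M ⊛_A N)`. -/
abbrev GrBal (n : ℤ) : Type :=
  Bal R A M N tM tN ξ ζ n ⧸ BalIm R A M N tM tN ξ ζ n

/-- The associated graded `Gr_i(M) = Mᵢ / M_{i-1}`. -/
abbrev GrM (i : ℤ) : Type := M i ⧸ LinearMap.range (tM (i - 1) i (by omega))

/-- The associated graded `Gr_j(N) = Nⱼ / N_{j-1}`. -/
abbrev GrN (j : ℤ) : Type := N j ⧸ LinearMap.range (tN (j - 1) j (by omega))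

/-- The direct sum `⊕_{i+j=n} Gr_i(M) ⊗ Gr_j(N)`, i.e. degree `n` of the graded product
`Gr(M) ⊗ Gr(N)`. -/
abbrev GrSum (n : ℤ) : Type :=
  DirectSum (CIdx n) (fun p => GrM R M tM p.1.1 ⊗[R] GrN R N tN p.1.2)

/-- The canonical inclusion of the `(i,j)` summand of the graded product. -/
abbrev grLof (n : ℤ) (p : CIdx n) :
    (GrM R M tM p.1.1 ⊗[R] GrN R N tN p.1.2) →ₗ[R] GrSum R M N tM tN n :=
  DirectSum.lof R (CIdx n) (fun q => GrM R M tM q.1.1 ⊗[R] GrN R N tN q.1.2) p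

/-- The relations defining the graded balanced product `Gr(M) ⊗_{Gr(A)} Gr(N)` (written on
representatives; the `Gr(A)`-actions on `Gr(M)`, `Gr(N)` are induced by `ξ`, `ζ`). -/
def GrBalRel (n : ℤ) : Submodule R (GrSum R M N tM tN n) :=
  Submodule.span R
    {w | ∃ (i j k : ℤ) (hijk : i + j + k = n) (x : M i) (a : A j) (y : N k),
      w = grLof R M N tM tN n ⟨(i + j, k), by omega⟩
            ((Submodule.Quotient.mk (ξ i j x a) : GrM R M tM (i + j)) ⊗ₜ[R]
              (Submodule.Quotient.mk y : GrN R N tN k))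
        - grLof R M N tM tN n ⟨(i, j + k), by omega⟩
            ((Submodule.Quotient.mk x : GrM R M tM i) ⊗ₜ[R]
              (Submodule.Quotient.mk (ζ j k a y) : GrN R N tN (j + k)))}

/-- Degree `n` of the graded balanced product `Gr(M) ⊗_{Gr(A)} Gr(N)`. -/
abbrev GrRHS (n : ℤ) : Type :=
  @HasQuotient.Quotient (GrSum R M N tM tN n) (Submodule R (GrSum R M N tM tN n))
    (@Submodule.hasQuotient R (GrSum R M N tM tN n) _ _ _) (GrBalRel R A M N tM tN ξ ζ n)

section Aux
variable (n : ℤ)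

/-- The composite quotient map `MNSum → GrBal`. -/
def toGrBal : MNSum R M N n →ₗ[R] GrBal R A M N tM tN ξ ζ n :=
  (BalIm R A M N tM tN ξ ζ n).mkQ ∘ₗ (BalRel R A M N tM tN ξ ζ n).mkQ ∘ₗ
    (MNConvRel R M N tM tN n).mkQ

lemma toGrBal_apply (z : MNSum R M N n) :
    toGrBal R A M N tM tN ξ ζ n z
      = Submodule.Quotient.mk (Submodule.Quotient.mk (Submodule.Quotient.mk z)) := rfl

lemma L1 (i j j' : ℤ) (hj : j' = j + 1) (h : i + j' = n) (hle : j ≤ j') (x : M i) (y : N j) :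
    toGrBal R A M N tM tN ξ ζ n (mnLof R M N n ⟨(i, j'), h⟩ (x ⊗ₜ[R] tN j j' hle y)) = 0 := by
  subst hj
  rw [toGrBal_apply, Submodule.Quotient.mk_eq_zero]
  exact Submodule.subset_span ⟨i, j, by omega, x, y, rfl⟩

lemma L2 (i i' j : ℤ) (hi : i' = i + 1) (h : i' + j = n) (hle : i ≤ i') (x : M i) (y : N j) :
    toGrBal R A M N tM tN ξ ζ n (mnLof R M N n ⟨(i', j), h⟩ (tM i i' hle x ⊗ₜ[R] y)) = 0 := by
  subst hi
  have key : ((Submodule.Quotient.mk (mnLof R M N n ⟨(i + 1, j), h⟩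
        (tM i (i + 1) hle x ⊗ₜ[R] y))) : MNConv R M N tM tN n)
      = Submodule.Quotient.mk (mnLof R M N n ⟨(i, j + 1), by omega⟩
          (x ⊗ₜ[R] tN j (j + 1) (by omega) y)) := by
    rw [Submodule.Quotient.eq]
    have hz : (mnLof R M N n ⟨(i, j + 1), by omega⟩ (x ⊗ₜ[R] tN j (j + 1) (by omega) y)
        - mnLof R M N n ⟨(i + 1, j), h⟩ (tM i (i + 1) hle x ⊗ₜ[R] y))
        ∈ MNConvRel R M N tM tN n :=
      Submodule.subset_span ⟨i, j, by omega, x, y, rfl⟩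
    have h2 := (MNConvRel R M N tM tN n).neg_mem hz
    rwa [neg_sub] at h2
  rw [toGrBal_apply, key, ← toGrBal_apply]
  exact L1 R A M N tM tN ξ ζ n i j (j + 1) rfl (by omega) (by omega) x y

lemma grM_zero (i i' : ℤ) (hi : i' = i + 1) (hle : i ≤ i') (x : M i) :
    (Submodule.Quotient.mk (tM i i' hle x) : GrM R M tM i') = 0 := by
  rw [Submodule.Quotient.mk_eq_zero]
  have h2 : i = i' - 1 := by omega
  subst h2
  exact ⟨x, rfl⟩

lemma grN_zero (j j' : ℤ) (hj : j' = j + 1) (hle : j ≤ j') (y : N j) :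
    (Submodule.Quotient.mk (tN j j' hle y) : GrN R N tN j') = 0 := by
  rw [Submodule.Quotient.mk_eq_zero]
  have h2 : j = j' - 1 := by omega
  subst h2
  exact ⟨y, rfl⟩

/-- The forward map on the direct sum. -/
def grmap : MNSum R M N n →ₗ[R] GrRHS R A M N tM tN ξ ζ n :=
  (@Submodule.mkQ R (GrSum R M N tM tN n) _ inferInstance _ (GrBalRel R A M N tM tN ξ ζ n)) ∘ₗ
    DirectSum.toModule R (CIdx n) (GrSum R M N tM tN n) (fun p =>
      grLof R M N tM tN n p ∘ₗ
        TensorProduct.map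
          (LinearMap.range (tM (p.1.1 - 1) p.1.1 (by omega))).mkQ
          (LinearMap.range (tN (p.1.2 - 1) p.1.2 (by omega))).mkQ)

lemma grmap_lof (p : CIdx n) (x : M p.1.1) (y : N p.1.2) :
    grmap R A M N tM tN ξ ζ n (mnLof R M N n p (x ⊗ₜ[R] y))
      = Submodule.Quotient.mk (grLof R M N tM tN n p
          ((Submodule.Quotient.mk x : GrM R M tM p.1.1) ⊗ₜ[R]
            (Submodule.Quotient.mk y : GrN R N tN p.1.2))) := by
  simp [grmap, DirectSum.toModule_lof]

def Fmap1 : MNConv R M N tM tN n →ₗ[R] GrRHS R A M N tM tN ξ ζ n :=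
  Submodule.liftQ _ (grmap R A M N tM tN ξ ζ n) (by
    rw [MNConvRel, Submodule.span_le]
    rintro z ⟨i, j, hij, x, y, rfl⟩
    simp only [SetLike.mem_coe, LinearMap.mem_ker, map_sub, grmap_lof]
    rw [grN_zero R N tN j (j + 1) rfl (by omega) y,
      grM_zero R M tM i (i + 1) rfl (by omega) x]
    simp)

def Fmap2 : Bal R A M N tM tN ξ ζ n →ₗ[R] GrRHS R A M N tM tN ξ ζ n :=
  Submodule.liftQ _ (Fmap1 R A M N tM tN ξ ζ n) (by
    rw [BalRel, Submodule.span_le]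
    rintro w ⟨i, j, k, hijk, x, a, y, rfl⟩
    simp only [SetLike.mem_coe, LinearMap.mem_ker, map_sub, Fmap1,
      Submodule.liftQ_apply, grmap_lof]
    rw [sub_eq_zero, Submodule.Quotient.eq]
    exact Submodule.subset_span ⟨i, j, k, hijk, x, a, y, rfl⟩)

def Fmap : GrBal R A M N tM tN ξ ζ n →ₗ[R] GrRHS R A M N tM tN ξ ζ n :=
  Submodule.liftQ _ (Fmap2 R A M N tM tN ξ ζ n) (by
    rw [BalIm, Submodule.span_le]
    rintro w ⟨i, j, hij, x, y, rfl⟩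
    simp only [SetLike.mem_coe, LinearMap.mem_ker, Fmap2, Fmap1,
      Submodule.liftQ_apply, grmap_lof]
    rw [grN_zero R N tN j (j + 1) rfl (by omega) y]
    simp)

lemma Fmap_mk (p : CIdx n) (x : M p.1.1) (y : N p.1.2) :
    Fmap R A M N tM tN ξ ζ n (Submodule.Quotient.mk (Submodule.Quotient.mk
        (Submodule.Quotient.mk (mnLof R M N n p (x ⊗ₜ[R] y)))))
      = Submodule.Quotient.mk (grLof R M N tM tN n p
          ((Submodule.Quotient.mk x : GrM R M tM p.1.1) ⊗ₜ[R]
            (Submodule.Quotient.mk y : GrN R N tN p.1.2))) := by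
  simp only [Fmap, Fmap2, Fmap1, Submodule.liftQ_apply, grmap_lof]

/-- The backward bilinear map on a summand. -/
def balB (p : CIdx n) : M p.1.1 →ₗ[R] N p.1.2 →ₗ[R] GrBal R A M N tM tN ξ ζ n :=
  (TensorProduct.mk R (M p.1.1) (N p.1.2)).compr₂
    (toGrBal R A M N tM tN ξ ζ n ∘ₗ mnLof R M N n p)

lemma balB_apply (p : CIdx n) (x : M p.1.1) (y : N p.1.2) :
    balB R A M N tM tN ξ ζ n p x y
      = toGrBal R A M N tM tN ξ ζ n (mnLof R M N n p (x ⊗ₜ[R] y)) := rfl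

def balB2 (p : CIdx n) :
    M p.1.1 →ₗ[R] GrN R N tN p.1.2 →ₗ[R] GrBal R A M N tM tN ξ ζ n where
  toFun x := Submodule.liftQ _ (balB R A M N tM tN ξ ζ n p x) (by
    rintro z ⟨y, rfl⟩
    simp only [LinearMap.mem_ker, balB_apply]
    exact L1 R A M N tM tN ξ ζ n p.1.1 (p.1.2 - 1) p.1.2 (by omega) p.2 (by omega) x y)
  map_add' x x' := by
    apply Submodule.linearMap_qext
    ext y
    simp [Submodule.liftQ_apply, map_add]
  map_smul' r x := by
    apply Submodule.linearMap_qext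
    ext y
    simp [Submodule.liftQ_apply, map_smul]

lemma balB2_apply (p : CIdx n) (x : M p.1.1) (y : N p.1.2) :
    balB2 R A M N tM tN ξ ζ n p x (Submodule.Quotient.mk y)
      = toGrBal R A M N tM tN ξ ζ n (mnLof R M N n p (x ⊗ₜ[R] y)) := rfl

def balB3 (p : CIdx n) :
    GrM R M tM p.1.1 →ₗ[R] GrN R N tN p.1.2 →ₗ[R] GrBal R A M N tM tN ξ ζ n :=
  Submodule.liftQ _ (balB2 R A M N tM tN ξ ζ n p) (by
    rintro z ⟨x, rfl⟩
    simp only [LinearMap.mem_ker]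
    apply Submodule.linearMap_qext
    ext y
    simp only [LinearMap.comp_apply, Submodule.mkQ_apply, LinearMap.zero_comp,
      LinearMap.zero_apply, balB2_apply]
    exact L2 R A M N tM tN ξ ζ n (p.1.1 - 1) p.1.1 p.1.2 (by omega) p.2 (by omega) x y)

def grToBal : GrSum R M N tM tN n →ₗ[R] GrBal R A M N tM tN ξ ζ n :=
  DirectSum.toModule R (CIdx n) (GrBal R A M N tM tN ξ ζ n)
    (fun p => TensorProduct.lift (balB3 R A M N tM tN ξ ζ n p))

lemma grToBal_lof (p : CIdx n) (x : M p.1.1) (y : N p.1.2) :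
    grToBal R A M N tM tN ξ ζ n (grLof R M N tM tN n p
        ((Submodule.Quotient.mk x : GrM R M tM p.1.1) ⊗ₜ[R]
          (Submodule.Quotient.mk y : GrN R N tN p.1.2)))
      = toGrBal R A M N tM tN ξ ζ n (mnLof R M N n p (x ⊗ₜ[R] y)) := by
  simp only [grToBal, DirectSum.toModule_lof, TensorProduct.lift.tmul, balB3,
    Submodule.liftQ_apply, balB2_apply]

def Gmap : GrRHS R A M N tM tN ξ ζ n →ₗ[R] GrBal R A M N tM tN ξ ζ n :=
  Submodule.liftQ _ (grToBal R A M N tM tN ξ ζ n) (by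
    rw [GrBalRel, Submodule.span_le]
    rintro w ⟨i, j, k, hijk, x, a, y, rfl⟩
    simp only [SetLike.mem_coe, LinearMap.mem_ker, map_sub, grToBal_lof]
    rw [sub_eq_zero, toGrBal_apply, toGrBal_apply]
    congr 1
    rw [Submodule.Quotient.eq]
    exact Submodule.subset_span ⟨i, j, k, hijk, x, a, y, rfl⟩)

lemma Gmap_mk (p : CIdx n) (x : M p.1.1) (y : N p.1.2) :
    Gmap R A M N tM tN ξ ζ n (Submodule.Quotient.mk (grLof R M N tM tN n p
        ((Submodule.Quotient.mk x : GrM R M tM p.1.1) ⊗ₜ[R]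
          (Submodule.Quotient.mk y : GrN R N tN p.1.2))))
      = toGrBal R A M N tM tN ξ ζ n (mnLof R M N n p (x ⊗ₜ[R] y)) := by
  simp only [Gmap, Submodule.liftQ_apply, grToBal_lof]

lemma GF : (Gmap R A M N tM tN ξ ζ n).comp (Fmap R A M N tM tN ξ ζ n)
    = LinearMap.id := by
  apply Submodule.linearMap_qext
  apply Submodule.linearMap_qext
  apply Submodule.linearMap_qext
  apply DirectSum.linearMap_ext
  intro p
  apply TensorProduct.ext'
  intro x y
  simp only [LinearMap.comp_apply, Submodule.mkQ_apply, LinearMap.id_apply]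
  rw [show (DirectSum.lof R (CIdx n) (fun q => M q.1.1 ⊗[R] N q.1.2) p) (x ⊗ₜ[R] y)
      = mnLof R M N n p (x ⊗ₜ[R] y) from rfl]
  rw [Fmap_mk, Gmap_mk, toGrBal_apply]

lemma FG : (Fmap R A M N tM tN ξ ζ n).comp (Gmap R A M N tM tN ξ ζ n)
    = LinearMap.id := by
  apply Submodule.linearMap_qext
  apply DirectSum.linearMap_ext
  intro p
  apply TensorProduct.ext'
  intro xm yn
  obtain ⟨x, rfl⟩ := Submodule.Quotient.mk_surjective _ xm
  obtain ⟨y, rfl⟩ := Submodule.Quotient.mk_surjective _ yn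
  simp only [LinearMap.comp_apply, Submodule.mkQ_apply, LinearMap.id_apply]
  rw [show (DirectSum.lof R (CIdx n)
        (fun q => GrM R M tM q.1.1 ⊗[R] GrN R N tN q.1.2) p)
        ((Submodule.Quotient.mk x) ⊗ₜ[R] (Submodule.Quotient.mk y))
      = grLof R M N tM tN n p ((Submodule.Quotient.mk x) ⊗ₜ[R]
          (Submodule.Quotient.mk y)) from rfl]
  rw [Gmap_mk, toGrBal_apply, Fmap_mk]

end Aux

/-- Let `A_*` be a filtered ring (a monoid for the Day convolution on `ℤ`-indexed filtered
modules, with transition maps `tA`, unit `u` and multiplications `μᵢⱼ : Aᵢ ⊗ Aⱼ → A_{i+j}`),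
`M_*` a filtered right `A_*`-module and `N_*` a filtered left `A_*`-module, with the
balanced product `M ⊛_{A} N` defined as the coequalizer of `M ⊛ A ⊛ N ⇉ M ⊛ N` in
filtered objects (using Day convolution).  Then there is a canonical natural isomorphism
`Gr(M ⊛_A N) ≅ Gr(M) ⊗_{Gr A} Gr(N)`, sending the class of `x ⊗ y ∈ Mᵢ ⊗ Nⱼ`
(`i + j = n`) to the class of `[x] ⊗ [y]`. -/
theorem stmt11
    (htA_id : ∀ i (h : i ≤ i), tA i i h = LinearMap.id)
    (htA_comp : ∀ i j k (hij : i ≤ j) (hjk : j ≤ k),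
      (tA j k hjk).comp (tA i j hij) = tA i k (hij.trans hjk))
    (htM_id : ∀ i (h : i ≤ i), tM i i h = LinearMap.id)
    (htM_comp : ∀ i j k (hij : i ≤ j) (hjk : j ≤ k),
      (tM j k hjk).comp (tM i j hij) = tM i k (hij.trans hjk))
    (htN_id : ∀ i (h : i ≤ i), tN i i h = LinearMap.id)
    (htN_comp : ∀ i j k (hij : i ≤ j) (hjk : j ≤ k),
      (tN j k hjk).comp (tN i j hij) = tN i k (hij.trans hjk))
    (hμcompat : ∀ (i i' j j' : ℤ) (hi : i ≤ i') (hj : j ≤ j') (a : A i) (b : A j),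
      tA (i + j) (i' + j') (by omega) (μ i j a b) = μ i' j' (tA i i' hi a) (tA j j' hj b))
    (hμassoc : ∀ (i j k : ℤ) (a : A i) (b : A j) (c : A k),
      μ (i + j) k (μ i j a b) c
        = tA (i + (j + k)) (i + j + k) (by omega) (μ i (j + k) a (μ j k b c)))
    (hμunitl : ∀ (j : ℤ) (a : A j), μ 0 j u a = tA j (0 + j) (by omega) a)
    (hμunitr : ∀ (i : ℤ) (a : A i), μ i 0 a u = tA i (i + 0) (by omega) a)
    (hξcompat : ∀ (i i' j j' : ℤ) (hi : i ≤ i') (hj : j ≤ j') (x : M i) (a : A j),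
      tM (i + j) (i' + j') (by omega) (ξ i j x a) = ξ i' j' (tM i i' hi x) (tA j j' hj a))
    (hξassoc : ∀ (i j k : ℤ) (x : M i) (a : A j) (b : A k),
      ξ (i + j) k (ξ i j x a) b
        = tM (i + (j + k)) (i + j + k) (by omega) (ξ i (j + k) x (μ j k a b)))
    (hξunit : ∀ (i : ℤ) (x : M i), ξ i 0 x u = tM i (i + 0) (by omega) x)
    (hζcompat : ∀ (i i' j j' : ℤ) (hi : i ≤ i') (hj : j ≤ j') (a : A i) (y : N j),
      tN (i + j) (i' + j') (by omega) (ζ i j a y) = ζ i' j' (tA i i' hi a) (tN j j' hj y))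
    (hζassoc : ∀ (i j k : ℤ) (a : A i) (b : A j) (y : N k),
      ζ (i + j) k (μ i j a b) y
        = tN (i + (j + k)) (i + j + k) (by omega) (ζ i (j + k) a (ζ j k b y)))
    (hζunit : ∀ (j : ℤ) (y : N j), ζ 0 j u y = tN j (0 + j) (by omega) y) :
    ∀ n : ℤ, ∃ e : GrBal R A M N tM tN ξ ζ n ≃ₗ[R] GrRHS R A M N tM tN ξ ζ n,
      ∀ (i j : ℤ) (h : i + j = n) (x : M i) (y : N j),
        e (Submodule.Quotient.mk (Submodule.Quotient.mk (Submodule.Quotient.mk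
              (mnLof R M N n ⟨(i, j), h⟩ (x ⊗ₜ[R] y)))))
          = Submodule.Quotient.mk (grLof R M N tM tN n ⟨(i, j), h⟩
              ((Submodule.Quotient.mk x : GrM R M tM i) ⊗ₜ[R]
                (Submodule.Quotient.mk y : GrN R N tN j))) := by
  intro n
  refine ⟨LinearEquiv.ofLinear (Fmap R A M N tM tN ξ ζ n) (Gmap R A M N tM tN ξ ζ n)
    (FG R A M N tM tN ξ ζ n) (GF R A M N tM tN ξ ζ n), ?_⟩
  intro i j h x y
  exact Fmap_mk R A M N tM tN ξ ζ n ⟨(i, j), h⟩ x y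

end Stmt11
end
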